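/- arXiv:math/0608138 — 2 statements merged into one kernel-verified Lean document; each statement's English description precedes it below -/
import Mathlib

section
/- For every n ∈ ℕ, 0 < p < 1 with q = 1 − p, and every t with −(1 − p) < t < p: d_TV(Bi(n, p − t), Bi(n, p)) ≤ |t| ( √n/√(pq) + (p − t)/(pq) + √((p − t)(q + t))/(pq√n) ). -/
open MeasureTheory ProbabilityTheory

noncomputable def dTV (P Q : Measure ℝ) : ℝ :=
  ⨆ A : {A : Set ℝ // MeasurableSet A}, |(P A.1).toReal - (Q A.1).toReal|

noncomputable def dloc (P Q : Measure ℝ) : ℝ :=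
  ⨆ x : ℝ, |(P (Set.Ico x (x + 1))).toReal - (Q (Set.Ico x (x + 1))).toReal|

/-- `D1 μ = ‖μ * (δ₁ - δ₀)‖`, the total variation norm of the signed measure
`μ*δ₁ - μ`; since this signed measure has total mass `0`, its variation norm equals
`2 * sup_A |(μ*δ₁)(A) - μ(A)|`. -/
noncomputable def D1 (μ : Measure ℝ) : ℝ :=
  2 * ⨆ A : {A : Set ℝ // MeasurableSet A},
    |(μ.map (· + 1) A.1).toReal - (μ A.1).toReal|

/-- `D2 μ = ‖μ * (δ₁ - δ₀)^{*2}‖ = ‖μ*δ₂ - 2 μ*δ₁ + μ‖`. -/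
noncomputable def D2 (μ : Measure ℝ) : ℝ :=
  2 * ⨆ A : {A : Set ℝ // MeasurableSet A},
    |(μ.map (· + 2) A.1).toReal - 2 * (μ.map (· + 1) A.1).toReal + (μ A.1).toReal|

/-- The binomial distribution `Bi(n, p)` as a measure on `ℝ`. -/
noncomputable def binomMeasure (n : ℕ) (p : ℝ) : Measure ℝ :=
  Measure.sum (fun k : Fin (n + 1) =>
    (ENNReal.ofReal ((n.choose k) * p ^ (k : ℕ) * (1 - p) ^ (n - (k : ℕ)))) •
      Measure.dirac ((k : ℕ) : ℝ))

/-- The centered binomial distribution `B̂i(n, p)`, i.e. `Bi(n,p)` shifted by `-np`. -/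
noncomputable def centeredBinom (n : ℕ) (p : ℝ) : Measure ℝ :=
  (binomMeasure n p).map (fun x => x - n * p)

/-! ### Auxiliary lemmas -/

open Finset Real

open scoped Classical

section Aux

/-- Trigonometric core inequality. -/
lemma key_trig {α β : ℝ} (h0 : 0 ≤ α) (hab : α ≤ β) (hb : β < π/2) {c : ℝ}
    (hc : c ≤ sin α * cos α + sin β * cos β) :
    (β - α) * c ≤ sin β ^ 2 - sin α ^ 2 := by
  have pyta := sin_sq_add_cos_sq α
  have pytb := sin_sq_add_cos_sq β
  have id1 : sin (β - α) * sin (β + α) = sin β ^ 2 - sin α ^ 2 := by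
    rw [Real.sin_sub, Real.sin_add]
    linear_combination sin β ^ 2 * pyta - sin α ^ 2 * pytb
  have id2 : cos (β - α) * sin (β + α) = sin β * cos β + sin α * cos α := by
    rw [Real.cos_sub, Real.sin_add]
    linear_combination sin β * cos β * pyta + sin α * cos α * pytb
  rcases eq_or_lt_of_le hab with h | h
  · subst h; simp
  · have hu0 : 0 < β - α := sub_pos.2 h
    have hupi : β - α < π / 2 := lt_of_le_of_lt (by linarith) hb
    have hcosu : 0 < cos (β - α) := Real.cos_pos_of_mem_Ioo ⟨by linarith [Real.pi_pos], hupi⟩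
    have htan : β - α < tan (β - α) := Real.lt_tan hu0 hupi
    have hucos : (β - α) * cos (β - α) ≤ sin (β - α) := by
      rw [Real.tan_eq_sin_div_cos] at htan
      calc (β - α) * cos (β - α) ≤ (sin (β - α) / cos (β - α)) * cos (β - α) := by
            apply mul_le_mul_of_nonneg_right htan.le hcosu.le
        _ = sin (β - α) := by field_simp
    have hsab : 0 ≤ sin (β + α) := by
      apply Real.sin_nonneg_of_nonneg_of_le_pi (by linarith)
      linarith [Real.pi_pos]
    calc (β - α) * c ≤ (β - α) * (sin α * cos α + sin β * cos β) :=
          mul_le_mul_of_nonneg_left hc hu0.le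
      _ = (β - α) * (cos (β - α) * sin (β + α)) := by rw [id2]; ring
      _ = ((β - α) * cos (β - α)) * sin (β + α) := by ring
      _ ≤ sin (β - α) * sin (β + α) := mul_le_mul_of_nonneg_right hucos hsab
      _ = sin β ^ 2 - sin α ^ 2 := id1

lemma arcsin_sqrt_diff {a b c : ℝ} (ha : 0 < a) (hab : a ≤ b) (hb : b < 1)
    (hc : c ≤ Real.sqrt (a * (1 - a)) + Real.sqrt (b * (1 - b))) :
    (arcsin (Real.sqrt b) - arcsin (Real.sqrt a)) * c ≤ b - a := by
  set α := arcsin (Real.sqrt a)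
  set β := arcsin (Real.sqrt b)
  have ha1 : a ≤ 1 := le_of_lt (lt_of_le_of_lt hab hb)
  have hb0 : 0 < b := lt_of_lt_of_le ha hab
  have hsa : sin α = Real.sqrt a :=
    Real.sin_arcsin (le_trans (by norm_num) (Real.sqrt_nonneg a)) (Real.sqrt_le_one.2 ha1)
  have hsb : sin β = Real.sqrt b :=
    Real.sin_arcsin (le_trans (by norm_num) (Real.sqrt_nonneg b)) (Real.sqrt_le_one.2 hb.le)
  have hca : cos α = Real.sqrt (1 - a) := by
    rw [Real.cos_arcsin, Real.sq_sqrt ha.le]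
  have hcb : cos β = Real.sqrt (1 - b) := by
    rw [Real.cos_arcsin, Real.sq_sqrt hb0.le]
  have h1 : sin α * cos α = Real.sqrt (a * (1 - a)) := by
    rw [hsa, hca, ← Real.sqrt_mul ha.le]
  have h2 : sin β * cos β = Real.sqrt (b * (1 - b)) := by
    rw [hsb, hcb, ← Real.sqrt_mul hb0.le]
  have := key_trig (α := α) (β := β) (Real.arcsin_nonneg.2 (Real.sqrt_nonneg a))
    (Real.monotone_arcsin (Real.sqrt_le_sqrt hab))
    (Real.arcsin_lt_pi_div_two.2 (by rw [show (1:ℝ) = Real.sqrt 1 by simp]; exact Real.sqrt_lt_sqrt hb0.le hb))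
    (c := c) (by rw [h1, h2]; linarith)
  rwa [hsa, hsb, Real.sq_sqrt hb0.le, Real.sq_sqrt ha.le] at this

/-- The binomial pmf. -/
noncomputable def bpmf (n k : ℕ) (s : ℝ) : ℝ := (n.choose k : ℝ) * s ^ k * (1 - s) ^ (n - k)

lemma bpmf_eq_eval (n k : ℕ) (s : ℝ) :
    bpmf n k s = Polynomial.eval s (bernsteinPolynomial ℝ n k) := by
  simp [bpmf, bernsteinPolynomial]

lemma sum_bpmf (n : ℕ) (s : ℝ) : ∑ k ∈ range (n + 1), bpmf n k s = 1 := by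
  have := congrArg (Polynomial.eval s) (bernsteinPolynomial.sum ℝ n)
  simpa [Polynomial.eval_finset_sum, bpmf_eq_eval] using this

lemma var_bpmf (n : ℕ) (s : ℝ) :
    ∑ k ∈ range (n + 1), ((n : ℝ) * s - k) ^ 2 * bpmf n k s = n * s * (1 - s) := by
  have := congrArg (Polynomial.eval s) (bernsteinPolynomial.variance ℝ n)
  simpa [Polynomial.eval_finset_sum, bpmf_eq_eval] using this

lemma pow_pred_mul {a : ℝ} {m : ℕ} (h : 0 < m) : a ^ (m - 1) * a = a ^ m := by
  conv_rhs => rw [← Nat.succ_pred_eq_of_pos h]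
  rw [pow_succ, Nat.pred_eq_sub_one]

lemma hasDerivAt_bpmf (n k : ℕ) (hk : k ≤ n) {s : ℝ} (h0 : s ≠ 0) (h1 : (1:ℝ) - s ≠ 0) :
    HasDerivAt (bpmf n k) (bpmf n k s * ((k : ℝ) - n * s) / (s * (1 - s))) s := by
  have hpow : HasDerivAt (fun x : ℝ => x ^ k) ((k : ℝ) * s ^ (k - 1)) s := hasDerivAt_pow k s
  have hsub : HasDerivAt (fun x : ℝ => 1 - x) (-1) s := (hasDerivAt_id s).const_sub 1
  have hq : HasDerivAt (fun x : ℝ => (1 - x) ^ (n - k))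
      (((n - k : ℕ) : ℝ) * (1 - s) ^ (n - k - 1) * (-1)) s := hsub.pow (n - k)
  have hprod : HasDerivAt (fun x : ℝ => (n.choose k : ℝ) * (x ^ k * (1 - x) ^ (n - k))) _ s :=
    ((hpow.mul hq).const_mul ((n.choose k : ℝ)))
  have heq : (fun x : ℝ => (n.choose k : ℝ) * (x ^ k * (1 - x) ^ (n - k))) = bpmf n k := by
    funext x; simp [bpmf]; ring
  rw [heq] at hprod
  convert hprod using 1
  rw [div_eq_iff (by exact mul_ne_zero h0 h1)]
  rcases Nat.eq_zero_or_pos k with hk0 | hk1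
  · subst hk0
    rcases Nat.eq_zero_or_pos n with hn0 | hn1
    · subst hn0; simp
    · have hp : (1 - s) ^ (n - 1) * (1 - s) = (1 - s) ^ n := pow_pred_mul hn1
      simp only [bpmf, Nat.choose_zero_right, Nat.cast_zero, pow_zero, Nat.sub_zero,
        Nat.cast_one, zero_mul, zero_sub, one_mul, zero_add, mul_neg, mul_one, neg_mul]
      linear_combination ((n:ℝ) * s) * hp
  · rcases eq_or_lt_of_le hk with hkn | hkn
    · subst hkn
      have hp : s ^ (k - 1) * s = s ^ k := pow_pred_mul hk1
      simp only [bpmf, Nat.choose_self, Nat.cast_one, Nat.sub_self, pow_zero,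
        Nat.cast_zero, zero_mul, mul_one, one_mul]
      linear_combination (-(k:ℝ) * (1 - s)) * hp
    · have hps : s ^ (k - 1) * s = s ^ k := pow_pred_mul hk1
      have hq1 : 0 < n - k := Nat.sub_pos_of_lt hkn
      have hpq : (1 - s) ^ (n - k - 1) * (1 - s) = (1 - s) ^ (n - k) := pow_pred_mul hq1
      have hcast : ((n - k : ℕ) : ℝ) = (n : ℝ) - k := by rw [Nat.cast_sub hk]
      rw [hcast]
      simp only [bpmf]
      linear_combination (-(n.choose k : ℝ) * k * (1 - s) ^ (n - k) * (1 - s)) * hps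
        + ((n.choose k : ℝ) * ((n : ℝ) - k) * s ^ k * s) * hpq

lemma bpmf_nonneg (n k : ℕ) {s : ℝ} (h0 : 0 ≤ s) (h1 : s ≤ 1) : 0 ≤ bpmf n k s := by
  unfold bpmf
  have : (0:ℝ) ≤ 1 - s := by linarith
  positivity

lemma sum_abs_le (n : ℕ) {s : ℝ} (h0 : 0 < s) (h1 : s < 1) :
    ∑ k ∈ range (n + 1), bpmf n k s * |(k : ℝ) - n * s| ≤ Real.sqrt (n * (s * (1 - s))) := by
  have hnn : ∀ k ∈ range (n+1), 0 ≤ bpmf n k s := fun k _ => bpmf_nonneg n k h0.le h1.le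
  have hcs := Finset.sum_mul_sq_le_sq_mul_sq (range (n+1))
    (fun k => Real.sqrt (bpmf n k s)) (fun k => Real.sqrt (bpmf n k s) * |(k : ℝ) - n * s|)
  have h2 : ∀ k ∈ range (n+1),
      Real.sqrt (bpmf n k s) * (Real.sqrt (bpmf n k s) * |(k : ℝ) - n * s|)
        = bpmf n k s * |(k : ℝ) - n * s| := by
    intro k hk
    rw [← mul_assoc, Real.mul_self_sqrt (hnn k hk)]
  have h3 : ∀ k ∈ range (n+1), Real.sqrt (bpmf n k s) ^ 2 = bpmf n k s := by
    intro k hk; exact Real.sq_sqrt (hnn k hk)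
  have h4 : ∀ k ∈ range (n+1),
      (Real.sqrt (bpmf n k s) * |(k : ℝ) - n * s|) ^ 2 = ((n : ℝ) * s - k) ^ 2 * bpmf n k s := by
    intro k hk
    rw [mul_pow, Real.sq_sqrt (hnn k hk), sq_abs]
    ring_nf
  rw [Finset.sum_congr rfl h2, Finset.sum_congr rfl h3, Finset.sum_congr rfl h4,
    sum_bpmf, var_bpmf, one_mul] at hcs
  have hnonneg : 0 ≤ ∑ k ∈ range (n + 1), bpmf n k s * |(k : ℝ) - n * s| :=
    Finset.sum_nonneg fun k hk => mul_nonneg (hnn k hk) (abs_nonneg _)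
  calc ∑ k ∈ range (n + 1), bpmf n k s * |(k : ℝ) - n * s|
      = Real.sqrt ((∑ k ∈ range (n + 1), bpmf n k s * |(k : ℝ) - n * s|) ^ 2) := by
        rw [Real.sqrt_sq hnonneg]
    _ ≤ Real.sqrt (n * (s * (1 - s))) := by
        apply Real.sqrt_le_sqrt; calc _ ≤ (n:ℝ) * s * (1-s) := hcs
                                      _ = (n:ℝ) * (s * (1-s)) := by ring

lemma hasDerivAt_H (n : ℕ) {x : ℝ} (h0 : 0 < x) (h1 : x < 1) :
    HasDerivAt (fun s : ℝ => 2 * Real.sqrt n * Real.arcsin (Real.sqrt s))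
      (Real.sqrt n / Real.sqrt (x * (1 - x))) x := by
  have hsq : HasDerivAt (√·) (1 / (2 * √x)) x := Real.hasDerivAt_sqrt (ne_of_gt h0)
  have hs1 : Real.sqrt x ≠ -1 := by
    have := Real.sqrt_nonneg x; intro h; rw [h] at this; linarith
  have hs2 : Real.sqrt x ≠ 1 := by
    intro h
    have : x = 1 := by
      have := congrArg (· ^ 2) h
      simpa [Real.sq_sqrt h0.le] using this
    linarith
  have harc := Real.hasDerivAt_arcsin hs1 hs2
  have := (harc.comp x hsq).const_mul (2 * Real.sqrt n)
  refine this.congr_deriv ?_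
  rw [Real.sq_sqrt h0.le, Real.sqrt_mul h0.le]
  have hx1 : Real.sqrt (1 - x) ≠ 0 := ne_of_gt (Real.sqrt_pos.2 (by linarith))
  have hx0 : Real.sqrt x ≠ 0 := by positivity
  field_simp

lemma F_diff_le (n : ℕ) (ε : ℕ → ℝ) (hε : ∀ k, |ε k| ≤ 1) {a b : ℝ}
    (ha : 0 < a) (hab : a ≤ b) (hb : b < 1) :
    (∑ k ∈ range (n + 1), ε k * bpmf n k b) - (∑ k ∈ range (n + 1), ε k * bpmf n k a) ≤
      2 * Real.sqrt n * (Real.arcsin (Real.sqrt b) - Real.arcsin (Real.sqrt a)) := by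
  set G : ℝ → ℝ := fun s =>
    2 * Real.sqrt n * Real.arcsin (Real.sqrt s) - ∑ k ∈ range (n + 1), ε k * bpmf n k s with hG
  have hDG : ∀ x : ℝ, 0 < x → x < 1 → HasDerivAt G
      (Real.sqrt n / Real.sqrt (x * (1 - x)) -
        ∑ k ∈ range (n + 1), ε k * (bpmf n k x * ((k : ℝ) - n * x) / (x * (1 - x)))) x := by
    intro x h0 h1
    apply HasDerivAt.sub (hasDerivAt_H n h0 h1)
    apply HasDerivAt.fun_sum
    intro k hk
    exact ((hasDerivAt_bpmf n k (Nat.lt_succ_iff.mp (mem_range.mp hk)) (ne_of_gt h0)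
      (by intro h; apply absurd h1; linarith [sub_eq_zero.mp h])).const_mul (ε k))
  have hder_nonneg : ∀ x : ℝ, 0 < x → x < 1 →
      0 ≤ Real.sqrt n / Real.sqrt (x * (1 - x)) -
        ∑ k ∈ range (n + 1), ε k * (bpmf n k x * ((k : ℝ) - n * x) / (x * (1 - x))) := by
    intro x h0 h1
    rw [sub_nonneg]
    have hxq : 0 < x * (1 - x) := by nlinarith
    calc ∑ k ∈ range (n + 1), ε k * (bpmf n k x * ((k : ℝ) - n * x) / (x * (1 - x)))
        ≤ ∑ k ∈ range (n + 1), bpmf n k x * |(k : ℝ) - n * x| / (x * (1 - x)) := by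
          apply Finset.sum_le_sum
          intro k hk
          calc ε k * (bpmf n k x * ((k : ℝ) - n * x) / (x * (1 - x)))
              ≤ |ε k * (bpmf n k x * ((k : ℝ) - n * x) / (x * (1 - x)))| := le_abs_self _
            _ = |ε k| * (bpmf n k x * |(k : ℝ) - n * x| / (x * (1 - x))) := by
                rw [abs_mul, abs_div, abs_mul, abs_of_nonneg (bpmf_nonneg n k h0.le h1.le),
                  abs_of_pos hxq]
            _ ≤ 1 * (bpmf n k x * |(k : ℝ) - n * x| / (x * (1 - x))) := by
                apply mul_le_mul_of_nonneg_right (hε k)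
                exact div_nonneg (mul_nonneg (bpmf_nonneg n k h0.le h1.le) (abs_nonneg _)) hxq.le
            _ = bpmf n k x * |(k : ℝ) - n * x| / (x * (1 - x)) := by rw [one_mul]
      _ = (∑ k ∈ range (n + 1), bpmf n k x * |(k : ℝ) - n * x|) / (x * (1 - x)) := by
          rw [Finset.sum_div]
      _ ≤ Real.sqrt ((n : ℝ) * (x * (1 - x))) / (x * (1 - x)) := by
          gcongr
          exact sum_abs_le n h0 h1
      _ = Real.sqrt n / Real.sqrt (x * (1 - x)) := by
          rw [Real.sqrt_mul (Nat.cast_nonneg n), mul_div_assoc, Real.sqrt_div_self']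
          rw [mul_one_div]
  have hmono : MonotoneOn G (Set.Icc a b) := by
    apply monotoneOn_of_deriv_nonneg (convex_Icc a b)
    · intro x hx
      exact ((hDG x (lt_of_lt_of_le ha hx.1) (lt_of_le_of_lt hx.2 hb)).continuousAt).continuousWithinAt
    · intro x hx
      rw [interior_Icc] at hx
      exact ((hDG x (lt_of_lt_of_le ha hx.1.le) (lt_of_le_of_lt hx.2.le hb)).differentiableAt).differentiableWithinAt
    · intro x hx
      rw [interior_Icc] at hx
      have h0x : 0 < x := lt_of_lt_of_le ha hx.1.le
      have hx1 : x < 1 := lt_of_le_of_lt hx.2.le hb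
      rw [(hDG x h0x hx1).deriv]
      exact hder_nonneg x h0x hx1
  have := hmono (Set.left_mem_Icc.2 hab) (Set.right_mem_Icc.2 hab) hab
  simp only [hG] at this
  linarith

lemma binom_apply (n : ℕ) {s : ℝ} (hs0 : 0 ≤ s) (hs1 : s ≤ 1) {A : Set ℝ}
    (hA : MeasurableSet A) :
    ((binomMeasure n s) A).toReal
      = ∑ k ∈ range (n + 1), (if ((k : ℕ) : ℝ) ∈ A then bpmf n k s else 0) := by
  rw [binomMeasure, Measure.sum_apply _ hA]
  rw [tsum_fintype]
  have hterm : ∀ k : Fin (n + 1),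
      ((ENNReal.ofReal ((n.choose k) * s ^ (k : ℕ) * (1 - s) ^ (n - (k : ℕ)))) •
        Measure.dirac (((k : ℕ) : ℝ))) A
      = ENNReal.ofReal (if (((k : ℕ) : ℕ) : ℝ) ∈ A then bpmf n (k : ℕ) s else 0) := by
    intro k
    rw [Measure.smul_apply, Measure.dirac_apply' _ hA, smul_eq_mul]
    by_cases hm : (((k : ℕ)) : ℝ) ∈ A
    · simp [Set.indicator_of_mem hm, hm, bpmf]
    · simp [Set.indicator_of_notMem hm, hm]
  rw [Finset.sum_congr rfl (fun k _ => hterm k)]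
  rw [ENNReal.toReal_sum (by intro k _; exact ENNReal.ofReal_ne_top)]
  rw [← Fin.sum_univ_eq_sum_range
    (fun k => (if ((k : ℕ) : ℝ) ∈ A then bpmf n k s else 0)) (n + 1)]
  apply Finset.sum_congr rfl
  intro k _
  rw [ENNReal.toReal_ofReal]
  split
  · exact bpmf_nonneg n k hs0 hs1
  · exact le_refl 0

end Aux

/-- Lemma 5.2 (total variation part): comparison of two binomial distributions
with different success probabilities. -/
theorem stmt14 (n : ℕ) (p t : ℝ) (hp : 0 < p) (hp1 : p < 1)
    (ht1 : -(1 - p) < t) (ht2 : t < p) :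
    dTV (binomMeasure n (p - t)) (binomMeasure n p) ≤
      |t| * (Real.sqrt n / Real.sqrt (p * (1 - p))
        + (p - t) / (p * (1 - p))
        + Real.sqrt ((p - t) * ((1 - p) + t)) / (p * (1 - p) * Real.sqrt n)) := by
  have hpt0 : 0 < p - t := by linarith
  have hpt1 : p - t < 1 := by linarith
  set a := min (p - t) p with ha_def
  set b := max (p - t) p with hb_def
  have ha : 0 < a := lt_min hpt0 hp
  have hab : a ≤ b := min_le_max
  have hb : b < 1 := max_lt hpt1 hp1
  have hba : b - a = |t| := by
    rcases le_total t 0 with h | h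
    · rw [abs_of_nonpos h, ha_def, hb_def, min_eq_right (by linarith), max_eq_left (by linarith)]
      ring
    · rw [abs_of_nonneg h, ha_def, hb_def, min_eq_left (by linarith), max_eq_right (by linarith)]
      ring
  set Δ : ℕ → ℝ := fun k => bpmf n k (p - t) - bpmf n k p with hΔ_def
  set ε : ℕ → ℝ := fun k => if 0 ≤ Δ k then 1 else -1 with hε_def
  have hε : ∀ k, |ε k| ≤ 1 := by
    intro k; rw [hε_def]; dsimp only; split <;> simp
  have habs : ∀ k, |Δ k| = ε k * Δ k := by
    intro k; rw [hε_def]; dsimp only; split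
    · rw [abs_of_nonneg (by assumption), one_mul]
    · rw [abs_of_neg (by linarith [lt_of_not_ge (by assumption)]), neg_one_mul]
  have hsumΔ : ∑ k ∈ range (n + 1), Δ k = 0 := by
    rw [hΔ_def]
    rw [Finset.sum_sub_distrib, sum_bpmf, sum_bpmf, sub_self]
  -- ℓ¹ bound
  have hl1 : ∑ k ∈ range (n + 1), |Δ k| ≤
      2 * Real.sqrt n * (Real.arcsin (Real.sqrt b) - Real.arcsin (Real.sqrt a)) := by
    rw [Finset.sum_congr rfl (fun k _ => habs k)]
    have key1 := F_diff_le n ε hε ha hab hb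
    have key2 := F_diff_le n (fun k => -ε k) (fun k => by rw [abs_neg]; exact hε k) ha hab hb
    simp only [neg_mul, Finset.sum_neg_distrib] at key2
    have hsplit : ∑ k ∈ range (n + 1), ε k * Δ k
        = (∑ k ∈ range (n + 1), ε k * bpmf n k (p - t))
          - (∑ k ∈ range (n + 1), ε k * bpmf n k p) := by
      rw [hΔ_def, ← Finset.sum_sub_distrib]
      apply Finset.sum_congr rfl
      intro k _; ring
    rcases le_total (p - t) p with h | h
    · have hae : a = p - t := min_eq_left h
      have hbe : b = p := max_eq_right h
      have e1 : (∑ k ∈ range (n + 1), ε k * bpmf n k (p - t))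
          = ∑ k ∈ range (n + 1), ε k * bpmf n k a := by rw [hae]
      have e2 : (∑ k ∈ range (n + 1), ε k * bpmf n k p)
          = ∑ k ∈ range (n + 1), ε k * bpmf n k b := by rw [hbe]
      rw [hsplit, e1, e2]
      linarith [key2]
    · have hae : a = p := min_eq_right h
      have hbe : b = p - t := max_eq_left h
      have e1 : (∑ k ∈ range (n + 1), ε k * bpmf n k (p - t))
          = ∑ k ∈ range (n + 1), ε k * bpmf n k b := by rw [hbe]
      have e2 : (∑ k ∈ range (n + 1), ε k * bpmf n k p)
          = ∑ k ∈ range (n + 1), ε k * bpmf n k a := by rw [hae]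
      rw [hsplit, e1, e2]
      linarith [key1]
  -- arcsin bound
  have hpq : 0 < p * (1 - p) := by nlinarith
  have hsq : 0 < Real.sqrt (p * (1 - p)) := Real.sqrt_pos.2 hpq
  have harc : (Real.arcsin (Real.sqrt b) - Real.arcsin (Real.sqrt a))
      * Real.sqrt (p * (1 - p)) ≤ |t| := by
    rw [← hba]
    apply arcsin_sqrt_diff ha hab hb
    rcases le_total (p - t) p with h | h
    · have hbe : b = p := max_eq_right h
      rw [← hbe]
      have := Real.sqrt_nonneg (a * (1 - a))
      linarith
    · have hae : a = p := min_eq_right h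
      rw [← hae]
      have := Real.sqrt_nonneg (b * (1 - b))
      linarith
  have harc2 : Real.arcsin (Real.sqrt b) - Real.arcsin (Real.sqrt a)
      ≤ |t| / Real.sqrt (p * (1 - p)) := by
    rw [le_div_iff₀ hsq]
    exact harc
  -- per-set bound
  have hAbound : ∀ A : {A : Set ℝ // MeasurableSet A},
      |((binomMeasure n (p - t)) A.1).toReal - ((binomMeasure n p) A.1).toReal|
        ≤ (1 / 2) * ∑ k ∈ range (n + 1), |Δ k| := by
    rintro ⟨A, hA⟩
    rw [binom_apply n hpt0.le hpt1.le hA, binom_apply n hp.le hp1.le hA,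
      ← Finset.sum_sub_distrib]
    have hgΔ : ∀ k ∈ range (n + 1),
        ((if ((k : ℕ) : ℝ) ∈ A then bpmf n k (p - t) else 0)
          - (if ((k : ℕ) : ℝ) ∈ A then bpmf n k p else 0))
        = (if ((k : ℕ) : ℝ) ∈ A then Δ k else 0) := by
      intro k _
      by_cases hm : ((k : ℕ) : ℝ) ∈ A <;> simp [hm, hΔ_def]
    rw [Finset.sum_congr rfl hgΔ]
    rw [abs_le]
    have hmax : ∑ k ∈ range (n + 1), max (Δ k) 0
        = (1 / 2) * ∑ k ∈ range (n + 1), |Δ k| := by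
      have : ∀ k ∈ range (n + 1), max (Δ k) 0 = (|Δ k| + Δ k) / 2 := by
        intro k _
        rcases le_total 0 (Δ k) with h | h
        · rw [max_eq_left h, abs_of_nonneg h]; ring
        · rw [max_eq_right h, abs_of_nonpos h]; ring
      rw [Finset.sum_congr rfl this]
      rw [← Finset.sum_div, Finset.sum_add_distrib, hsumΔ, add_zero]
      ring
    have hmaxneg : ∑ k ∈ range (n + 1), max (-Δ k) 0
        = (1 / 2) * ∑ k ∈ range (n + 1), |Δ k| := by
      have : ∀ k ∈ range (n + 1), max (-Δ k) 0 = (|Δ k| - Δ k) / 2 := by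
        intro k _
        rcases le_total 0 (Δ k) with h | h
        · rw [max_eq_right (by linarith), abs_of_nonneg h]; ring
        · rw [max_eq_left (by linarith), abs_of_nonpos h]; ring
      rw [Finset.sum_congr rfl this]
      rw [← Finset.sum_div, Finset.sum_sub_distrib, hsumΔ, sub_zero]
      ring
    constructor
    · rw [← hmaxneg]
      have : -∑ k ∈ range (n + 1), (if ((k : ℕ) : ℝ) ∈ A then Δ k else 0)
          ≤ ∑ k ∈ range (n + 1), max (-Δ k) 0 := by
        rw [← Finset.sum_neg_distrib]
        apply Finset.sum_le_sum
        intro k _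
        by_cases hm : ((k : ℕ) : ℝ) ∈ A
        · simp only [hm, if_true]; exact le_max_left _ _
        · simp only [hm, if_false, neg_zero]; exact le_max_right _ _
      linarith
    · rw [← hmax]
      apply Finset.sum_le_sum
      intro k _
      by_cases hm : ((k : ℕ) : ℝ) ∈ A
      · simp only [hm, if_true]; exact le_max_left _ _
      · simp only [hm, if_false]; exact le_max_right _ _
  -- assemble
  have hdtv : dTV (binomMeasure n (p - t)) (binomMeasure n p)
      ≤ (1 / 2) * ∑ k ∈ range (n + 1), |Δ k| := by
    apply ciSup_le hAbound
  have hchain : (1 / 2) * ∑ k ∈ range (n + 1), |Δ k|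
      ≤ |t| * (Real.sqrt n / Real.sqrt (p * (1 - p))) := by
    calc (1 / 2) * ∑ k ∈ range (n + 1), |Δ k|
        ≤ (1 / 2) * (2 * Real.sqrt n * (Real.arcsin (Real.sqrt b) - Real.arcsin (Real.sqrt a))) := by
          apply mul_le_mul_of_nonneg_left hl1 (by norm_num)
      _ = Real.sqrt n * (Real.arcsin (Real.sqrt b) - Real.arcsin (Real.sqrt a)) := by ring
      _ ≤ Real.sqrt n * (|t| / Real.sqrt (p * (1 - p))) :=
          mul_le_mul_of_nonneg_left harc2 (Real.sqrt_nonneg _)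
      _ = |t| * (Real.sqrt n / Real.sqrt (p * (1 - p))) := by ring
  have hextra : 0 ≤ (p - t) / (p * (1 - p))
      ∧ 0 ≤ Real.sqrt ((p - t) * ((1 - p) + t)) / (p * (1 - p) * Real.sqrt n) := by
    constructor
    · exact div_nonneg hpt0.le hpq.le
    · exact div_nonneg (Real.sqrt_nonneg _) (mul_nonneg hpq.le (Real.sqrt_nonneg _))
  calc dTV (binomMeasure n (p - t)) (binomMeasure n p)
      ≤ (1 / 2) * ∑ k ∈ range (n + 1), |Δ k| := hdtv
    _ ≤ |t| * (Real.sqrt n / Real.sqrt (p * (1 - p))) := hchain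
    _ ≤ |t| * (Real.sqrt n / Real.sqrt (p * (1 - p))
        + (p - t) / (p * (1 - p))
        + Real.sqrt ((p - t) * ((1 - p) + t)) / (p * (1 - p) * Real.sqrt n)) := by
      apply mul_le_mul_of_nonneg_left _ (abs_nonneg t)
      linarith [hextra.1, hextra.2]
end

section
/- Let a ∈ ℝ and let ĝ : ℤ + a → ℝ be bounded. Define f : ℝ → ℝ by f(w + x) := Θĝ(w−1) + xΔĝ(w−1) + (1/2)x²Δ²ĝ(w−1) for w ∈ ℤ + a and x ∈ [0,1), where Δĝ(w) := ĝ(w+1) − ĝ(w), Δ² := Δ∘Δ, and Θĝ(w) := (ĝ(w+1) + ĝ(w))/2. Then (i) f is continuously differentiable with f(w) = Θĝ(w−1) and f'(w) = Δĝ(w−1) for all w ∈ ℤ + a; (ii) f' is absolutely continuous with almost-everywhere second derivative f''(w + x) = Δ²ĝ(w−1) for w ∈ ℤ + a, 0 ≤ x < 1; and (iii) for every random variable U taking values in a lattice of ℝ with span 1 and every z ∈ ℝ, |E f''(U + z)| ≤ min( ‖Δĝ‖ D¹(L(U)) , ‖ĝ‖ D²(L(U)) ), where ‖·‖ is the supremum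 norm. -/
open MeasureTheory ProbabilityTheory Set

namespace Stmt18P

variable {μ : Measure ℝ} {c : ℝ}

lemma img_meas (σ : ℤ → ℤ) (K : Set ℤ) :
    MeasurableSet ((fun k : ℤ => ((σ k : ℤ) : ℝ) + c) '' K) :=
  (Set.Countable.image (Set.to_countable K) _).measurableSet

lemma L_img (σ : ℤ → ℤ) (hσ : Function.Injective σ) (K : Set ℤ) :
    μ ((fun k : ℤ => ((σ k : ℤ) : ℝ) + c) '' K) = ∑' k : K, μ {((σ (k:ℤ) : ℤ) : ℝ) + c} := by
  have hinj : Function.Injective (fun k : ℤ => ((σ k : ℤ) : ℝ) + c) := by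
    intro x y h
    exact hσ (by exact_mod_cast add_right_cancel h)
  rw [Set.image_eq_iUnion, Set.biUnion_eq_iUnion]
  rw [measure_iUnion]
  · intro x y hxy
    simp only [Function.onFun, Set.disjoint_singleton]
    exact fun h => hxy (Subtype.ext (hσ (by exact_mod_cast add_right_cancel h)))
  · exact fun i => measurableSet_singleton _

lemma L_map (n : ℝ) (m : ℤ) (hm : n = (m:ℝ)) (σ : ℤ → ℤ) (hσ : Function.Injective σ)
    (K : Set ℤ) :
    μ.map (· + n) ((fun k : ℤ => ((σ k : ℤ) : ℝ) + c) '' K)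
      = ∑' k : K, μ {(((σ (k:ℤ) - m) : ℤ) : ℝ) + c} := by
  rw [Measure.map_apply (by fun_prop) (img_meas σ K)]
  have hpre : (· + n) ⁻¹' ((fun k : ℤ => ((σ k : ℤ) : ℝ) + c) '' K)
      = (fun k : ℤ => (((σ k - m) : ℤ) : ℝ) + c) '' K := by
    ext v
    simp only [Set.mem_preimage, Set.mem_image]
    constructor
    · rintro ⟨k, hk, hv⟩
      exact ⟨k, hk, by push_cast; subst hm; linarith⟩
    · rintro ⟨k, hk, hv⟩
      exact ⟨k, hk, by push_cast at hv ⊢; subst hm; linarith⟩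
  rw [hpre, L_img (fun k => σ k - m) (sub_left_injective.comp hσ) K]

lemma abs_tsum_two {q : ℤ → ℝ} (hq : Summable q) (h0 : ∑' k, q k = 0) :
    ∑' k, |q k| = 2 * ∑' k, max (q k) 0 := by
  have hpos : Summable (fun k => max (q k) 0) := by
    apply hq.abs.of_nonneg_of_le (fun k => le_max_right _ _)
    intro k; exact max_le (le_abs_self _) (abs_nonneg _)
  have hneg : Summable (fun k => max (-q k) 0) := by
    apply hq.abs.of_nonneg_of_le (fun k => le_max_right _ _)
    intro k; exact max_le (neg_le_abs _) (abs_nonneg _)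
  have habs : ∀ k, |q k| = max (q k) 0 + max (-q k) 0 := by
    intro k; rcases le_total (q k) 0 with h | h
    · rw [abs_of_nonpos h, max_eq_right h, max_eq_left (by linarith)]; ring
    · rw [abs_of_nonneg h, max_eq_left h, max_eq_right (by linarith)]; ring
  have hsub : ∀ k, max (-q k) 0 = max (q k) 0 - q k := by
    intro k; rcases le_total (q k) 0 with h | h
    · rw [max_eq_left (by linarith), max_eq_right h]; ring
    · rw [max_eq_right (by linarith), max_eq_left h]; ring
  calc ∑' k, |q k| = ∑' k, (max (q k) 0 + max (-q k) 0) := by simp_rw [habs]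
    _ = (∑' k, max (q k) 0) + ∑' k, max (-q k) 0 := Summable.tsum_add hpos hneg
    _ = (∑' k, max (q k) 0) + ((∑' k, max (q k) 0) - ∑' k, q k) := by
        congr 1
        simp_rw [hsub]
        exact Summable.tsum_sub hpos hq
    _ = 2 * ∑' k, max (q k) 0 := by rw [h0]; ring

lemma tsum_posset {q : ℤ → ℝ} (hq : Summable q) :
    ∑' k : {k : ℤ | 0 < q k}, q (k : ℤ) = ∑' k, max (q k) 0 := by
  rw [tsum_subtype]
  congr 1
  funext k
  by_cases h : 0 < q k
  · rw [Set.indicator_of_mem (show k ∈ {k : ℤ | 0 < q k} from h) q, max_eq_left h.le]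
  · rw [Set.indicator_of_notMem (show k ∉ {k : ℤ | 0 < q k} from h) q,
      max_eq_right (by push_neg at h; exact h)]


variable [IsProbabilityMeasure μ]

lemma toReal_le_one (ν : Measure ℝ) [IsProbabilityMeasure ν] (A : Set ℝ) :
    (ν A).toReal ≤ 1 := by
  have := prob_le_one (μ := ν) (s := A)
  simpa using ENNReal.toReal_mono (by norm_num) this

lemma p_summable (c : ℝ) : Summable (fun k : ℤ => (μ {((k:ℤ):ℝ) + c}).toReal) := by
  apply ENNReal.summable_toReal
  have hinj : Function.Injective (fun k : ℤ => ((k:ℤ):ℝ) + c) := fun x y h => by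
    exact_mod_cast add_right_cancel h
  have : ∑' k : ℤ, μ {((k:ℤ):ℝ) + c} = μ (⋃ k : ℤ, {((k:ℤ):ℝ) + c}) := by
    rw [measure_iUnion]
    · intro x y hxy
      simp only [Function.onFun, Set.disjoint_singleton]
      exact fun h => hxy (hinj h)
    · exact fun i => measurableSet_singleton _
  rw [this]
  exact (lt_of_le_of_lt (measure_mono (Set.subset_univ _)) (measure_lt_top μ _)).ne

lemma bddAbove_D1 (ν : Measure ℝ) [IsProbabilityMeasure ν] [IsProbabilityMeasure μ] :
    BddAbove (Set.range fun A : {A : Set ℝ // MeasurableSet A} =>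
      |(ν A.1).toReal - (μ A.1).toReal|) := by
  refine ⟨2, ?_⟩
  rintro x ⟨A, rfl⟩
  have h1 := toReal_le_one ν A.1
  have h2 := toReal_le_one μ A.1
  have h3 : 0 ≤ (ν A.1).toReal := ENNReal.toReal_nonneg
  have h4 : 0 ≤ (μ A.1).toReal := ENNReal.toReal_nonneg
  rw [abs_le]; constructor <;> linarith

lemma bddAbove_D2 (ν₂ ν₁ : Measure ℝ) [IsProbabilityMeasure ν₂] [IsProbabilityMeasure ν₁]
    [IsProbabilityMeasure μ] :
    BddAbove (Set.range fun A : {A : Set ℝ // MeasurableSet A} =>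
      |(ν₂ A.1).toReal - 2 * (ν₁ A.1).toReal + (μ A.1).toReal|) := by
  refine ⟨4, ?_⟩
  rintro x ⟨A, rfl⟩
  have h1 := toReal_le_one ν₂ A.1
  have h2 := toReal_le_one ν₁ A.1
  have h3 := toReal_le_one μ A.1
  have h4 : 0 ≤ (ν₂ A.1).toReal := ENNReal.toReal_nonneg
  have h5 : 0 ≤ (ν₁ A.1).toReal := ENNReal.toReal_nonneg
  have h6 : 0 ≤ (μ A.1).toReal := ENNReal.toReal_nonneg
  rw [abs_le]; constructor <;> linarith

lemma key1 (c : ℝ) :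
    ∑' k : ℤ, |(μ {(((k - 1 : ℤ)):ℝ) + c}).toReal - (μ {((k:ℤ):ℝ) + c}).toReal|
      ≤ 2 * ⨆ A : {A : Set ℝ // MeasurableSet A},
        |(μ.map (· + 1) A.1).toReal - (μ A.1).toReal| := by
  set p : ℤ → ℝ := fun k => (μ {((k:ℤ):ℝ) + c}).toReal with hp_def
  have hp : Summable p := p_summable c
  have hpm : Summable (fun k : ℤ => p (k - 1)) := hp.comp_injective sub_left_injective
  set q : ℤ → ℝ := fun k => p (k - 1) - p k with hq_def
  have hq : Summable q := hpm.sub hp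
  have h0 : ∑' k, q k = 0 := by
    rw [hq_def, Summable.tsum_sub hpm hp]
    have hre : ∑' k : ℤ, p (k - 1) = ∑' k, p k := by
      have := (Equiv.subRight (1 : ℤ)).tsum_eq p
      simpa [Equiv.subRight_apply] using this
    rw [hre]; ring
  set K : Set ℤ := {k | 0 < q k} with hK_def
  haveI : IsProbabilityMeasure (μ.map (· + 1)) :=
    Measure.isProbabilityMeasure_map (by fun_prop)
  set A : Set ℝ := (fun k : ℤ => (((fun k : ℤ => k) k : ℤ) : ℝ) + c) '' K with hA_def
  have hμA : (μ A).toReal = ∑' k : K, p (k : ℤ) := by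
    rw [hA_def, L_img (fun k => k) (fun x y h => h) K,
      ENNReal.tsum_toReal_eq (fun _ => measure_ne_top μ _)]
  have hνA : (μ.map (· + 1) A).toReal = ∑' k : K, p ((k : ℤ) - 1) := by
    rw [hA_def, L_map 1 1 (by norm_num) (fun k => k) (fun x y h => h) K,
      ENNReal.tsum_toReal_eq (fun _ => measure_ne_top μ _)]
  have hsub1 : Summable (fun k : K => p ((k : ℤ) - 1)) :=
    hp.comp_injective (sub_left_injective.comp Subtype.val_injective)
  have hsub2 : Summable (fun k : K => p (k : ℤ)) :=
    hp.comp_injective Subtype.val_injective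
  have hqK : (μ.map (· + 1) A).toReal - (μ A).toReal = ∑' k : K, q (k : ℤ) := by
    rw [hμA, hνA, ← Summable.tsum_sub hsub1 hsub2]
  have hqK_nonneg : 0 ≤ ∑' k : K, q (k : ℤ) :=
    tsum_nonneg fun k => (le_of_lt k.2)
  calc ∑' k, |q k| = 2 * ∑' k, max (q k) 0 := abs_tsum_two hq h0
    _ = 2 * ∑' k : K, q (k : ℤ) := by rw [tsum_posset hq]
    _ = 2 * |(μ.map (· + 1) A).toReal - (μ A).toReal| := by
        rw [hqK, abs_of_nonneg hqK_nonneg]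
    _ ≤ 2 * ⨆ A : {A : Set ℝ // MeasurableSet A},
        |(μ.map (· + 1) A.1).toReal - (μ A.1).toReal| := by
        have hb := bddAbove_D1 (μ := μ) (μ.map (· + 1))
        have := le_ciSup hb (⟨A, img_meas (fun k => k) K⟩ : {A : Set ℝ // MeasurableSet A})
        linarith

lemma key2 (c : ℝ) :
    ∑' k : ℤ, |(μ {(((k - 1 : ℤ)):ℝ) + c}).toReal - 2 * (μ {((k:ℤ):ℝ) + c}).toReal
        + (μ {(((k + 1 : ℤ)):ℝ) + c}).toReal|
      ≤ 2 * ⨆ A : {A : Set ℝ // MeasurableSet A},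
        |(μ.map (· + 2) A.1).toReal - 2 * (μ.map (· + 1) A.1).toReal + (μ A.1).toReal| := by
  set p : ℤ → ℝ := fun k => (μ {((k:ℤ):ℝ) + c}).toReal with hp_def
  have hp : Summable p := p_summable c
  have hpm : Summable (fun k : ℤ => p (k - 1)) := hp.comp_injective sub_left_injective
  have hpp : Summable (fun k : ℤ => p (k + 1)) := hp.comp_injective (add_left_injective 1)
  set q : ℤ → ℝ := fun k => p (k - 1) - 2 * p k + p (k + 1) with hq_def
  have hq : Summable q := (hpm.sub (hp.mul_left 2)).add hpp
  have hrem : ∑' k : ℤ, p (k - 1) = ∑' k, p k := by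
    have := (Equiv.subRight (1 : ℤ)).tsum_eq p
    simpa [Equiv.subRight_apply] using this
  have hrep : ∑' k : ℤ, p (k + 1) = ∑' k, p k := by
    have := (Equiv.addRight (1 : ℤ)).tsum_eq p
    simpa using this
  have h0 : ∑' k, q k = 0 := by
    rw [hq_def, Summable.tsum_add (hpm.sub (hp.mul_left 2)) hpp,
      Summable.tsum_sub hpm (hp.mul_left 2), tsum_mul_left, hrem, hrep]
    ring
  set K : Set ℤ := {k | 0 < q k} with hK_def
  haveI : IsProbabilityMeasure (μ.map (· + 1)) :=
    Measure.isProbabilityMeasure_map (by fun_prop)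
  haveI : IsProbabilityMeasure (μ.map (· + 2)) :=
    Measure.isProbabilityMeasure_map (by fun_prop)
  have hσ : Function.Injective (fun k : ℤ => k + 1) := add_left_injective 1
  set A : Set ℝ := (fun k : ℤ => (((fun k : ℤ => k + 1) k : ℤ) : ℝ) + c) '' K with hA_def
  have hμA : (μ A).toReal = ∑' k : K, p ((k : ℤ) + 1) := by
    rw [hA_def, L_img (fun k => k + 1) hσ K,
      ENNReal.tsum_toReal_eq (fun _ => measure_ne_top μ _)]
  have hν1A : (μ.map (· + 1) A).toReal = ∑' k : K, p (k : ℤ) := by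
    rw [hA_def, L_map 1 1 (by norm_num) (fun k => k + 1) hσ K,
      ENNReal.tsum_toReal_eq (fun _ => measure_ne_top μ _)]
    exact tsum_congr fun k => by rw [show (k : ℤ) + 1 - 1 = (k : ℤ) by ring]
  have hν2A : (μ.map (· + 2) A).toReal = ∑' k : K, p ((k : ℤ) - 1) := by
    rw [hA_def, L_map 2 2 (by norm_num) (fun k => k + 1) hσ K,
      ENNReal.tsum_toReal_eq (fun _ => measure_ne_top μ _)]
    exact tsum_congr fun k => by rw [show (k : ℤ) + 1 - 2 = (k : ℤ) - 1 by ring]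
  have hsub1 : Summable (fun k : K => p ((k : ℤ) - 1)) :=
    hp.comp_injective (sub_left_injective.comp Subtype.val_injective)
  have hsub2 : Summable (fun k : K => p (k : ℤ)) :=
    hp.comp_injective Subtype.val_injective
  have hsub3 : Summable (fun k : K => p ((k : ℤ) + 1)) :=
    hp.comp_injective ((add_left_injective 1).comp Subtype.val_injective)
  have hqK : (μ.map (· + 2) A).toReal - 2 * (μ.map (· + 1) A).toReal + (μ A).toReal
      = ∑' k : K, q (k : ℤ) := by
    rw [hμA, hν1A, hν2A]
    rw [show (fun k : K => q (k : ℤ))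
        = fun k : K => (p ((k : ℤ) - 1) - 2 * p (k : ℤ)) + p ((k : ℤ) + 1) from
      funext fun k => by simp only [hq_def]]
    rw [Summable.tsum_add (hsub1.sub (hsub2.mul_left 2)) hsub3,
      Summable.tsum_sub hsub1 (hsub2.mul_left 2), tsum_mul_left]
  have hqK_nonneg : 0 ≤ ∑' k : K, q (k : ℤ) :=
    tsum_nonneg fun k => (le_of_lt k.2)
  calc ∑' k, |q k| = 2 * ∑' k, max (q k) 0 := abs_tsum_two hq h0
    _ = 2 * ∑' k : K, q (k : ℤ) := by rw [tsum_posset hq]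
    _ = 2 * |(μ.map (· + 2) A).toReal - 2 * (μ.map (· + 1) A).toReal + (μ A).toReal| := by
        rw [hqK, abs_of_nonneg hqK_nonneg]
    _ ≤ _ := by
        have hb := bddAbove_D2 (μ := μ) (μ.map (· + 2)) (μ.map (· + 1))
        have := le_ciSup hb (⟨A, img_meas (fun k => k + 1) K⟩ : {A : Set ℝ // MeasurableSet A})
        linarith

end Stmt18P

namespace Stmt18Aux

variable (a : ℝ) (g : ℝ → ℝ)

noncomputable def t (k : ℤ) : ℝ := g ((k : ℝ) + a)

noncomputable def Q (k : ℤ) (u : ℝ) : ℝ :=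
  (t a g k + t a g (k-1)) / 2 + (u - ((k:ℝ)+a)) * (t a g k - t a g (k-1))
    + (u - ((k:ℝ)+a))^2 / 2 * (t a g (k+1) - 2 * t a g k + t a g (k-1))

noncomputable def dQ (k : ℤ) (u : ℝ) : ℝ :=
  (t a g k - t a g (k-1)) + (u - ((k:ℝ)+a)) * (t a g (k+1) - 2 * t a g k + t a g (k-1))

noncomputable def phi (u : ℝ) : ℝ := dQ a g ⌊u - a⌋ u

lemma t_sub_one (k : ℤ) : t a g (k-1) = g (((k:ℝ)+a) - 1) := by
  unfold t; congr 1; push_cast; ring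

lemma t_add_one (k : ℤ) : t a g (k+1) = g (((k:ℝ)+a) + 1) := by
  unfold t; congr 1; push_cast; ring

lemma hasDerivAt_Q (k : ℤ) (u : ℝ) : HasDerivAt (Q a g k) (dQ a g k u) u := by
  have h1 : HasDerivAt (fun u : ℝ => u - ((k:ℝ)+a)) 1 u := (hasDerivAt_id u).sub_const _
  have h2 : HasDerivAt (fun u : ℝ => (u - ((k:ℝ)+a))^2) (2*(u - ((k:ℝ)+a))) u := by
    simpa using h1.fun_pow 2
  have := (((h1.mul_const (t a g k - t a g (k-1))).const_add ((t a g k + t a g (k-1))/2)).add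
    ((h2.div_const 2).mul_const (t a g (k+1) - 2 * t a g k + t a g (k-1))))
  exact this.congr_deriv (by unfold dQ; ring)

lemma hasDerivAt_dQ (k : ℤ) (u : ℝ) :
    HasDerivAt (dQ a g k) (t a g (k+1) - 2 * t a g k + t a g (k-1)) u := by
  have h1 : HasDerivAt (fun u : ℝ => u - ((k:ℝ)+a)) 1 u := (hasDerivAt_id u).sub_const _
  have := (h1.mul_const (t a g (k+1) - 2 * t a g k + t a g (k-1))).const_add
    (t a g k - t a g (k-1))
  unfold dQ
  simpa using this

lemma continuous_dQ (k : ℤ) : Continuous (dQ a g k) := by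
  unfold dQ; fun_prop

lemma floor_eq {k : ℤ} {u : ℝ} (h1 : (k:ℝ) + a ≤ u) (h2 : u < (k:ℝ) + 1 + a) :
    ⌊u - a⌋ = k := by
  rw [Int.floor_eq_iff]
  refine ⟨by linarith, by push_cast; linarith⟩

variable {f : ℝ → ℝ}
variable (hf : ∀ (k : ℤ) (x : ℝ), 0 ≤ x → x < 1 →
      f (((k : ℝ) + a) + x) =
        (g ((k : ℝ) + a) + g (((k : ℝ) + a) - 1)) / 2
        + x * (g ((k : ℝ) + a) - g (((k : ℝ) + a) - 1))
        + x ^ 2 / 2 *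
          (g (((k : ℝ) + a) + 1) - 2 * g ((k : ℝ) + a) + g (((k : ℝ) + a) - 1)))

include hf

lemma f_eq (u : ℝ) : f u = Q a g ⌊u - a⌋ u := by
  set k := ⌊u - a⌋ with hk
  set x := u - ((k:ℝ) + a) with hx
  have hx0 : 0 ≤ x := by
    have := Int.floor_le (u - a); simp only [hx]; linarith
  have hx1 : x < 1 := by
    have := Int.lt_floor_add_one (u - a); simp only [hx]; push_cast at this ⊢; linarith
  have hu : u = ((k:ℝ) + a) + x := by ring
  rw [hu, hf k x hx0 hx1, ← t_sub_one a g k, ← t_add_one a g k]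
  show _ = Q a g k (((k:ℝ) + a) + x)
  unfold Q
  have : ((k:ℝ) + a) + x - ((k:ℝ)+a) = x := by ring
  rw [this]
  rfl

lemma f_eq_on {k : ℤ} {u : ℝ} (h1 : (k:ℝ) + a ≤ u) (h2 : u < (k:ℝ) + 1 + a) :
    f u = Q a g k u := by
  rw [f_eq a g hf u, floor_eq a h1 h2]


omit hf

lemma Q_match (k : ℤ) : Q a g k (((k:ℝ)+1) + a) = Q a g (k+1) (((k:ℝ)+1) + a) := by
  unfold Q
  have e1 : (k+1-1 : ℤ) = k := by ring
  rw [e1]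
  push_cast
  ring

lemma dQ_match (k : ℤ) : dQ a g k (((k:ℝ)+1) + a) = dQ a g (k+1) (((k:ℝ)+1) + a) := by
  unfold dQ
  have e1 : (k+1-1 : ℤ) = k := by ring
  rw [e1]
  push_cast
  ring

include hf

lemma hasDerivAt_f (u : ℝ) : HasDerivAt f (phi a g u) u := by
  set k := ⌊u - a⌋ with hk
  have hlb : (k:ℝ) + a ≤ u := by have := Int.floor_le (u - a); simp only [hk]; linarith
  have hub : u < (k:ℝ) + 1 + a := by
    have := Int.lt_floor_add_one (u - a); push_cast at this ⊢; linarith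
  rcases eq_or_lt_of_le hlb with heq | hlt
  · -- lattice point
    have hfu : f u = Q a g k u := f_eq_on a g hf hlb hub
    -- right derivative
    have hr : HasDerivWithinAt f (dQ a g k u) (Ici u) u := by
      refine (hasDerivAt_Q a g k u).hasDerivWithinAt.congr_of_eventuallyEq ?_ hfu
      filter_upwards [Ico_mem_nhdsGE_of_mem (⟨le_refl u, hub⟩ : u ∈ Ico u ((k:ℝ)+1+a))]
        with v hv
      exact f_eq_on a g hf (le_trans hlb hv.1) hv.2
    -- left derivative
    have hqm : Q a g (k-1) u = Q a g k u := by
      have := Q_match a g (k-1)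
      have e2 : ((k:ℝ)-1) + 1 + a = u := by push_cast [← heq]; ring
      have e3 : (k-1+1 : ℤ) = k := by ring
      rw [e3] at this
      push_cast at this
      rw [show (((k:ℝ)-1) + 1 + a) = u from e2] at this
      exact this
    have hdqm : dQ a g (k-1) u = dQ a g k u := by
      have := dQ_match a g (k-1)
      have e3 : (k-1+1 : ℤ) = k := by ring
      rw [e3] at this
      push_cast at this
      rw [show (((k:ℝ)-1) + 1 + a) = u from (by push_cast [← heq]; ring)] at this
      exact this
    have hl : HasDerivWithinAt f (dQ a g k u) (Iic u) u := by
      rw [← hdqm]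
      refine (hasDerivAt_Q a g (k-1) u).hasDerivWithinAt.congr_of_eventuallyEq ?_
        (by rw [hfu, ← hqm])
      have hmem : Ioc (u - 1) u ∈ nhdsWithin u (Iic u) :=
        Ioc_mem_nhdsLE_of_mem ⟨by linarith, le_refl u⟩
      filter_upwards [hmem] with v hv
      rcases eq_or_lt_of_le hv.2 with rfl | hvlt
      · rw [hfu, ← hqm]
      · refine f_eq_on a g hf ?_ ?_
        · push_cast; linarith [hv.1]
        · push_cast; linarith
    have := hl.union hr
    rw [Iic_union_Ici, hasDerivWithinAt_univ] at this
    exact this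
  · -- interior point
    have : HasDerivAt f (dQ a g k u) u := by
      refine (hasDerivAt_Q a g k u).congr_of_eventuallyEq ?_
      have hmem : Ioo ((k:ℝ)+a) ((k:ℝ)+1+a) ∈ nhds u := Ioo_mem_nhds hlt hub
      filter_upwards [hmem] with v hv
      exact f_eq_on a g hf hv.1.le hv.2
    exact this

omit hf

lemma continuous_phi : Continuous (phi a g) := by
  rw [continuous_iff_continuousAt]
  intro u
  set k := ⌊u - a⌋ with hk
  have hlb : (k:ℝ) + a ≤ u := by have := Int.floor_le (u - a); simp only [hk]; linarith
  have hub : u < (k:ℝ) + 1 + a := by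
    have := Int.lt_floor_add_one (u - a); push_cast at this ⊢; linarith
  have hphi_eq : ∀ v, (k:ℝ) + a ≤ v → v < (k:ℝ)+1+a → phi a g v = dQ a g k v := by
    intro v h1 h2
    unfold phi
    rw [floor_eq a h1 h2]
  rcases eq_or_lt_of_le hlb with heq | hlt
  · have hdqm : dQ a g (k-1) u = dQ a g k u := by
      have := dQ_match a g (k-1)
      have e3 : (k-1+1 : ℤ) = k := by ring
      rw [e3] at this
      push_cast at this
      rw [show (((k:ℝ)-1) + 1 + a) = u from (by push_cast [← heq]; ring)] at this
      exact this
    have hr : ContinuousWithinAt (phi a g) (Ici u) u := by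
      refine ((continuous_dQ a g k).continuousAt.continuousWithinAt).congr_of_eventuallyEq ?_
        (hphi_eq u hlb hub)
      filter_upwards [Ico_mem_nhdsGE_of_mem (⟨le_refl u, hub⟩ : u ∈ Ico u ((k:ℝ)+1+a))]
        with v hv
      exact hphi_eq v (le_trans hlb hv.1) hv.2
    have hl : ContinuousWithinAt (phi a g) (Iic u) u := by
      refine ((continuous_dQ a g (k-1)).continuousAt.continuousWithinAt).congr_of_eventuallyEq ?_
        (by rw [hphi_eq u hlb hub, ← hdqm])
      have hmem : Ioc (u - 1) u ∈ nhdsWithin u (Iic u) :=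
        Ioc_mem_nhdsLE_of_mem ⟨by linarith, le_refl u⟩
      filter_upwards [hmem] with v hv
      rcases eq_or_lt_of_le hv.2 with rfl | hvlt
      · rw [hphi_eq v hlb hub, ← hdqm]
      · unfold phi
        rw [floor_eq a (k := k - 1) (by push_cast; linarith [hv.1]) (by push_cast; linarith)]
    have := hl.union hr
    rw [Iic_union_Ici] at this
    exact this.continuousAt (by simp)
  · refine ContinuousAt.congr ((continuous_dQ a g k).continuousAt) ?_
    have hmem : Ioo ((k:ℝ)+a) ((k:ℝ)+1+a) ∈ nhds u := Ioo_mem_nhds hlt hub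
    filter_upwards [hmem] with v hv
    exact (hphi_eq v hv.1.le hv.2).symm


noncomputable def D2t (k : ℤ) : ℝ := t a g (k+1) - 2 * t a g k + t a g (k-1)

noncomputable def fpp (u : ℝ) : ℝ := D2t a g ⌊u - a⌋

lemma measurable_fpp : Measurable (fpp a g) := by
  have hfl : Measurable fun u : ℝ => ⌊u - a⌋ := (measurable_id.sub_const a).floor
  exact Measurable.comp (f := fun u : ℝ => ⌊u - a⌋) (g := fun k : ℤ => D2t a g k)
    measurable_from_top hfl

lemma hasDerivWithinAt_phi (u : ℝ) :
    HasDerivWithinAt (phi a g) (fpp a g u) (Ioi u) u := by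
  set k := ⌊u - a⌋ with hk
  have hlb : (k:ℝ) + a ≤ u := by have := Int.floor_le (u - a); simp only [hk]; linarith
  have hub : u < (k:ℝ) + 1 + a := by
    have := Int.lt_floor_add_one (u - a); push_cast at this ⊢; linarith
  have : HasDerivWithinAt (dQ a g k) (fpp a g u) (Ioi u) u := by
    have h := hasDerivAt_dQ a g k u
    exact h.hasDerivWithinAt
  refine this.congr_of_eventuallyEq ?_ rfl
  filter_upwards [Ioo_mem_nhdsGT_of_mem (⟨le_refl u, hub⟩ : u ∈ Ico u ((k:ℝ)+1+a))]
    with v hv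
  unfold phi
  rw [floor_eq a (le_trans hlb hv.1.le) hv.2]

lemma norm_fpp_le {C : ℝ} (hC : ∀ k : ℤ, |g ((k : ℝ) + a)| ≤ C) (s : ℝ) :
    ‖fpp a g s‖ ≤ 4 * C := by
    have h1 := hC (⌊s - a⌋ + 1)
    have h2 := hC ⌊s - a⌋
    have h3 := hC (⌊s - a⌋ - 1)
    rw [Real.norm_eq_abs]
    unfold fpp D2t t
    rw [abs_le] at h1 h2 h3 ⊢
    constructor <;> [nlinarith [h1.1, h1.2, h2.1, h2.2, h3.1, h3.2];
      nlinarith [h1.1, h1.2, h2.1, h2.2, h3.1, h3.2]]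

lemma ftc {C : ℝ} (hC : ∀ k : ℤ, |g ((k : ℝ) + a)| ≤ C) (u v : ℝ) :
    phi a g v - phi a g u = ∫ s in u..v, fpp a g s := by
  have hbound : ∀ s : ℝ, ‖fpp a g s‖ ≤ 4 * C := norm_fpp_le a g hC
  have hint : IntervalIntegrable (fpp a g) volume u v := by
    refine (intervalIntegrable_const (c := 4 * C)).mono_fun
      ((measurable_fpp a g).aestronglyMeasurable) ?_
    refine Filter.Eventually.of_forall fun s => ?_
    rw [Real.norm_eq_abs (4 * C), abs_of_nonneg (by
      have := (abs_nonneg _).trans (hbound u); linarith)]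
    exact hbound s
  rw [intervalIntegral.integral_eq_sub_of_hasDeriv_right
    ((continuous_phi a g).continuousOn)
    (fun x _ => hasDerivWithinAt_phi a g x) hint]

end Stmt18Aux

/-- The interpolation construction (2.11)–(2.13) and estimate (2.15).
For bounded `ĝ` on the lattice `ℤ + a`, the interpolation `f` with
`f(w+x) = Θĝ(w−1) + x Δĝ(w−1) + x²/2 Δ²ĝ(w−1)` is `C¹` with
`f(w) = Θĝ(w−1)`, `f'(w) = Δĝ(w−1)`; `f'` is absolutely continuous with
a.e. second derivative `f''(w+x) = Δ²ĝ(w−1)` (expressed through the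
fundamental theorem of calculus `f'(v) − f'(u) = ∫_u^v f''`); and for every
random variable `U` on a lattice of span `1` and every `z ∈ ℝ`,
`|E f''(U+z)| ≤ min(‖Δĝ‖ D¹(L(U)), ‖ĝ‖ D²(L(U)))`. -/
theorem stmt18 (a : ℝ) (g : ℝ → ℝ)
    (hbdd : ∃ C : ℝ, ∀ k : ℤ, |g ((k : ℝ) + a)| ≤ C)
    (f f'' : ℝ → ℝ)
    (hf : ∀ (k : ℤ) (x : ℝ), 0 ≤ x → x < 1 →
      f (((k : ℝ) + a) + x) =
        (g ((k : ℝ) + a) + g (((k : ℝ) + a) - 1)) / 2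
        + x * (g ((k : ℝ) + a) - g (((k : ℝ) + a) - 1))
        + x ^ 2 / 2 *
          (g (((k : ℝ) + a) + 1) - 2 * g ((k : ℝ) + a) + g (((k : ℝ) + a) - 1)))
    (hf'' : ∀ u : ℝ, f'' u =
      g (((⌊u - a⌋ : ℝ) + a) + 1) - 2 * g ((⌊u - a⌋ : ℝ) + a)
        + g (((⌊u - a⌋ : ℝ) + a) - 1)) :
    ContDiff ℝ 1 f ∧
    (∀ k : ℤ, f ((k : ℝ) + a) =
      (g ((k : ℝ) + a) + g (((k : ℝ) + a) - 1)) / 2) ∧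
    (∀ k : ℤ, deriv f ((k : ℝ) + a) =
      g ((k : ℝ) + a) - g (((k : ℝ) + a) - 1)) ∧
    (∀ u v : ℝ, deriv f v - deriv f u = ∫ s in u..v, f'' s) ∧
    (∀ (Ω : Type) (_ : MeasureSpace Ω),
      IsProbabilityMeasure (ℙ : Measure Ω) →
      ∀ U : Ω → ℝ, Measurable U →
      (∃ c : ℝ, ∀ᵐ ω ∂(ℙ : Measure Ω), ∃ k : ℤ, U ω = (k : ℝ) + c) →
      ∀ z : ℝ,
      |∫ ω, f'' (U ω + z) ∂(ℙ : Measure Ω)| ≤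
        min ((⨆ k : ℤ, |g (((k : ℝ) + a) + 1) - g ((k : ℝ) + a)|) *
              D1 ((ℙ : Measure Ω).map U))
            ((⨆ k : ℤ, |g ((k : ℝ) + a)|) * D2 ((ℙ : Measure Ω).map U))) := by
  classical
  obtain ⟨C, hC⟩ := hbdd
  have hderiv : ∀ u, HasDerivAt f (Stmt18Aux.phi a g u) u := Stmt18Aux.hasDerivAt_f a g hf
  have hderiv_eq : deriv f = Stmt18Aux.phi a g := funext fun u => (hderiv u).deriv
  have hfpp : f'' = Stmt18Aux.fpp a g := by
    funext u
    rw [hf'' u, Stmt18Aux.fpp, Stmt18Aux.D2t,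
      Stmt18Aux.t_add_one a g ⌊u - a⌋, Stmt18Aux.t_sub_one a g ⌊u - a⌋]
    rfl
  refine ⟨?_, ?_, ?_, ?_, ?_⟩
  · rw [contDiff_one_iff_deriv]
    exact ⟨fun u => (hderiv u).differentiableAt, hderiv_eq ▸ Stmt18Aux.continuous_phi a g⟩
  · intro k
    have hk : f ((k:ℝ) + a) = Stmt18Aux.Q a g k ((k:ℝ) + a) :=
      Stmt18Aux.f_eq_on a g hf le_rfl (by linarith)
    rw [hk, Stmt18Aux.Q, Stmt18Aux.t_sub_one a g k]
    simp [Stmt18Aux.t]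
  · intro k
    rw [hderiv_eq]
    have hfl : ⌊(k:ℝ) + a - a⌋ = k := by simp
    rw [Stmt18Aux.phi, hfl, Stmt18Aux.dQ, Stmt18Aux.t_sub_one a g k]
    simp [Stmt18Aux.t]
  · intro u v
    rw [hderiv_eq, hfpp]
    exact Stmt18Aux.ftc a g hC u v
  · intro Ω _ hprob U hU hlat z
    obtain ⟨c, hc⟩ := hlat
    set μ : Measure ℝ := (ℙ : Measure Ω).map U with hμ
    haveI hμprob : IsProbabilityMeasure μ := Measure.isProbabilityMeasure_map hU.aemeasurable
    set e : ℤ → ℝ := fun k => (k : ℝ) + c with he_def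
    have he : Function.Injective e := fun x y h => by
      exact_mod_cast add_right_cancel h
    set m : ℤ := ⌊c + z - a⌋ with hm
    set p : ℤ → ℝ := fun k => (μ {((k : ℤ) : ℝ) + c}).toReal with hp_def
    have hp : Summable p := Stmt18P.p_summable c
    have hp0 : ∀ k, 0 ≤ p k := fun k => ENNReal.toReal_nonneg
    have hpm : Summable (fun k : ℤ => p (k - 1)) := hp.comp_injective sub_left_injective
    have hpp : Summable (fun k : ℤ => p (k + 1)) := hp.comp_injective (add_left_injective 1)
    have hlatval : ∀ k : ℤ, Stmt18Aux.fpp a g (e k + z) = Stmt18Aux.D2t a g (m + k) := by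
      intro k
      unfold Stmt18Aux.fpp
      congr 1
      rw [he_def]
      simp only
      rw [show (k : ℝ) + c + z - a = (c + z - a) + (k : ℝ) by ring, Int.floor_add_intCast]
    have hFmeas : Measurable fun u : ℝ => Stmt18Aux.fpp a g (u + z) :=
      (Stmt18Aux.measurable_fpp a g).comp (measurable_add_const z)
    have hFbdd : ∀ u : ℝ, ‖Stmt18Aux.fpp a g (u + z)‖ ≤ 4 * C := fun u =>
      Stmt18Aux.norm_fpp_le a g hC _
    rw [hfpp]
    have hint1 : ∫ ω, Stmt18Aux.fpp a g (U ω + z) ∂(ℙ : Measure Ω)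
        = ∫ u, Stmt18Aux.fpp a g (u + z) ∂μ := by
      rw [hμ, integral_map hU.aemeasurable hFmeas.aestronglyMeasurable]
    have hS : ∀ᵐ u ∂μ, u ∈ Set.range e := by
      rw [hμ]
      refine (ae_map_iff hU.aemeasurable ((Set.countable_range e).measurableSet)).mpr ?_
      filter_upwards [hc] with ω hω
      obtain ⟨k, hk⟩ := hω
      exact ⟨k, hk.symm⟩
    have hres : μ.restrict (Set.range e) = μ := Measure.restrict_eq_self_of_ae_mem hS
    have hIOn : IntegrableOn (fun u => Stmt18Aux.fpp a g (u + z)) (Set.range e) μ := by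
      rw [IntegrableOn, hres]
      exact Integrable.mono' (integrable_const (4 * C)) hFmeas.aestronglyMeasurable
        (Filter.Eventually.of_forall hFbdd)
    have hint2 : ∫ u, Stmt18Aux.fpp a g (u + z) ∂μ
        = ∑' k : ℤ, p k * Stmt18Aux.D2t a g (m + k) := by
      calc ∫ u, Stmt18Aux.fpp a g (u + z) ∂μ
          = ∫ u in Set.range e, Stmt18Aux.fpp a g (u + z) ∂μ := by rw [hres]
        _ = ∑' x : Set.range e, (μ {(x : ℝ)}).toReal • Stmt18Aux.fpp a g ((x : ℝ) + z) :=
            setIntegral_countable _ (Set.countable_range e) hIOn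
        _ = ∑' k : ℤ, (μ {e k}).toReal • Stmt18Aux.fpp a g (e k + z) :=
            ((Equiv.ofInjective e he).tsum_eq
              (fun x : Set.range e => (μ {(x : ℝ)}).toReal •
                Stmt18Aux.fpp a g ((x : ℝ) + z))).symm
        _ = ∑' k : ℤ, p k * Stmt18Aux.D2t a g (m + k) := by
            exact tsum_congr fun k => by rw [hlatval k, smul_eq_mul]
    rw [hint1, hint2]
    -- bounds on the two sup-norms
    set M1 : ℝ := ⨆ k : ℤ, |g (((k : ℝ) + a) + 1) - g ((k : ℝ) + a)| with hM1
    set M2 : ℝ := ⨆ k : ℤ, |g ((k : ℝ) + a)| with hM2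
    have bdd1 : BddAbove (Set.range fun k : ℤ => |g (((k : ℝ) + a) + 1) - g ((k : ℝ) + a)|) := by
      refine ⟨C + C, ?_⟩
      rintro x ⟨k, rfl⟩
      have h1 : |g (((k : ℝ) + a) + 1)| ≤ C := by
        rw [← Stmt18Aux.t_add_one a g k]; exact hC (k + 1)
      have h2 : |g ((k : ℝ) + a)| ≤ C := hC k
      have h1' := abs_le.mp h1
      have h2' := abs_le.mp h2
      rw [abs_le]; constructor <;> [linarith; linarith]
    have bdd2 : BddAbove (Set.range fun k : ℤ => |g ((k : ℝ) + a)|) := by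
      refine ⟨C, ?_⟩
      rintro x ⟨k, rfl⟩
      exact hC k
    have hM1_nonneg : 0 ≤ M1 := le_trans (abs_nonneg _) (le_ciSup bdd1 0)
    have hM2_nonneg : 0 ≤ M2 := le_trans (abs_nonneg _) (le_ciSup bdd2 0)
    have ht_bound : ∀ j : ℤ, |Stmt18Aux.t a g (j + 1) - Stmt18Aux.t a g j| ≤ M1 := by
      intro j
      have h := le_ciSup bdd1 j
      have e1 : Stmt18Aux.t a g (j + 1) = g (((j : ℝ) + a) + 1) := Stmt18Aux.t_add_one a g j
      rw [e1]
      exact h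
    have ht_bound2 : ∀ j : ℤ, |Stmt18Aux.t a g j| ≤ M2 := fun j => le_ciSup bdd2 j
    -- first bound (D1)
    have bound1 : |∑' k : ℤ, p k * Stmt18Aux.D2t a g (m + k)| ≤ M1 * D1 μ := by
      set h : ℤ → ℝ := fun j => Stmt18Aux.t a g (m + j) - Stmt18Aux.t a g (m + j - 1)
        with hh_def
      have hhb : ∀ j : ℤ, |h j| ≤ M1 := by
        intro j
        have := ht_bound (m + j - 1)
        rw [show m + j - 1 + 1 = m + j by ring] at this
        exact this
      have hD2t : ∀ k : ℤ, Stmt18Aux.D2t a g (m + k) = h (k + 1) - h k := by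
        intro k
        simp only [hh_def]
        rw [show m + (k + 1) - 1 = m + k by ring, show m + (k + 1) = (m + k) + 1 by ring]
        unfold Stmt18Aux.D2t
        ring
      have s1 : Summable fun k : ℤ => p k * h (k + 1) := by
        apply Summable.of_abs
        refine Summable.of_nonneg_of_le (fun k => abs_nonneg _) (fun k => ?_) (hp.mul_left M1)
        rw [abs_mul, abs_of_nonneg (hp0 k)]
        calc p k * |h (k + 1)| ≤ p k * M1 := mul_le_mul_of_nonneg_left (hhb _) (hp0 k)
          _ = M1 * p k := mul_comm _ _
      have s2 : Summable fun k : ℤ => p k * h k := by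
        apply Summable.of_abs
        refine Summable.of_nonneg_of_le (fun k => abs_nonneg _) (fun k => ?_) (hp.mul_left M1)
        rw [abs_mul, abs_of_nonneg (hp0 k)]
        calc p k * |h k| ≤ p k * M1 := mul_le_mul_of_nonneg_left (hhb _) (hp0 k)
          _ = M1 * p k := mul_comm _ _
      have s1' : Summable fun k : ℤ => p (k - 1) * h k := by
        apply Summable.of_abs
        refine Summable.of_nonneg_of_le (fun k => abs_nonneg _) (fun k => ?_)
          (hpm.mul_left M1)
        rw [abs_mul, abs_of_nonneg (hp0 (k - 1))]
        calc p (k - 1) * |h k| ≤ p (k - 1) * M1 :=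
              mul_le_mul_of_nonneg_left (hhb _) (hp0 (k - 1))
          _ = M1 * p (k - 1) := mul_comm _ _
      have hre1 : ∑' k : ℤ, p k * h (k + 1) = ∑' k : ℤ, p (k - 1) * h k := by
        have h1 := (Equiv.subRight (1 : ℤ)).tsum_eq (fun k => p k * h (k + 1))
        rw [← h1]
        exact tsum_congr fun k => by
          rw [Equiv.subRight_apply, show k - 1 + 1 = k by ring]
      have q_def : ∀ k : ℤ, p (k - 1) - p k
          = (μ {(((k - 1 : ℤ)) : ℝ) + c}).toReal - (μ {((k : ℤ) : ℝ) + c}).toReal :=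
        fun k => rfl
      have hq : Summable fun k : ℤ => p (k - 1) - p k := hpm.sub hp
      have hmain : ∑' k : ℤ, p k * Stmt18Aux.D2t a g (m + k)
          = ∑' k : ℤ, (p (k - 1) - p k) * h k := by
        rw [show (fun k : ℤ => p k * Stmt18Aux.D2t a g (m + k))
            = fun k : ℤ => p k * h (k + 1) - p k * h k from
          funext fun k => by rw [hD2t k]; ring]
        rw [Summable.tsum_sub s1 s2, hre1, ← Summable.tsum_sub s1' s2]
        exact tsum_congr fun k => by ring
      rw [hmain]
      have habs_sum : Summable fun k : ℤ => |(p (k - 1) - p k) * h k| := by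
        refine Summable.of_nonneg_of_le (fun k => abs_nonneg _) (fun k => ?_)
          (hq.abs.mul_right M1)
        rw [abs_mul]
        exact mul_le_mul_of_nonneg_left (hhb k) (abs_nonneg _)
      calc |∑' k : ℤ, (p (k - 1) - p k) * h k|
          ≤ ∑' k : ℤ, |(p (k - 1) - p k) * h k| := by
            have := norm_tsum_le_tsum_norm (f := fun k : ℤ => (p (k - 1) - p k) * h k)
              (by simpa only [Real.norm_eq_abs] using habs_sum)
            simpa only [Real.norm_eq_abs] using this
        _ ≤ ∑' k : ℤ, |p (k - 1) - p k| * M1 := by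
            refine Summable.tsum_le_tsum (fun k => ?_) habs_sum (hq.abs.mul_right M1)
            rw [abs_mul]
            exact mul_le_mul_of_nonneg_left (hhb k) (abs_nonneg _)
        _ = (∑' k : ℤ, |p (k - 1) - p k|) * M1 := tsum_mul_right
        _ ≤ (2 * ⨆ A : {A : Set ℝ // MeasurableSet A},
              |(μ.map (· + 1) A.1).toReal - (μ A.1).toReal|) * M1 := by
            refine mul_le_mul_of_nonneg_right ?_ hM1_nonneg
            exact Stmt18P.key1 c
        _ = M1 * D1 μ := by rw [D1]; ring
    -- second bound (D2)
    have bound2 : |∑' k : ℤ, p k * Stmt18Aux.D2t a g (m + k)| ≤ M2 * D2 μ := by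
      set sf : ℤ → ℝ := fun j => Stmt18Aux.t a g (m + j) with hsf_def
      have hsb : ∀ j : ℤ, |sf j| ≤ M2 := fun j => ht_bound2 (m + j)
      have hD2t : ∀ k : ℤ, Stmt18Aux.D2t a g (m + k) = sf (k + 1) - 2 * sf k + sf (k - 1) := by
        intro k
        simp only [hsf_def]
        rw [show m + (k + 1) = (m + k) + 1 by ring, show m + (k - 1) = (m + k) - 1 by ring]
        unfold Stmt18Aux.D2t
        ring
      have mk_sum : ∀ (pp : ℤ → ℝ), Summable pp → (∀ k, 0 ≤ pp k) →
          ∀ (ss : ℤ → ℝ), (∀ j, |ss j| ≤ M2) → Summable fun k : ℤ => pp k * ss k := by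
        intro pp hpp hpp0 ss hss
        apply Summable.of_abs
        refine Summable.of_nonneg_of_le (fun k => abs_nonneg _) (fun k => ?_) (hpp.mul_left M2)
        rw [abs_mul, abs_of_nonneg (hpp0 k)]
        calc pp k * |ss k| ≤ pp k * M2 := mul_le_mul_of_nonneg_left (hss _) (hpp0 k)
          _ = M2 * pp k := mul_comm _ _
      have s1 : Summable fun k : ℤ => p k * sf (k + 1) :=
        mk_sum p hp hp0 (fun k => sf (k + 1)) (fun k => hsb _)
      have s2 : Summable fun k : ℤ => p k * sf k := mk_sum p hp hp0 sf hsb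
      have s3 : Summable fun k : ℤ => p k * sf (k - 1) :=
        mk_sum p hp hp0 (fun k => sf (k - 1)) (fun k => hsb _)
      have s1' : Summable fun k : ℤ => p (k - 1) * sf k :=
        mk_sum _ hpm (fun k => hp0 _) sf hsb
      have s3' : Summable fun k : ℤ => p (k + 1) * sf k :=
        mk_sum _ hpp (fun k => hp0 _) sf hsb
      have hre1 : ∑' k : ℤ, p k * sf (k + 1) = ∑' k : ℤ, p (k - 1) * sf k := by
        have h1 := (Equiv.subRight (1 : ℤ)).tsum_eq (fun k => p k * sf (k + 1))
        rw [← h1]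
        exact tsum_congr fun k => by
          rw [Equiv.subRight_apply, show k - 1 + 1 = k by ring]
      have hre3 : ∑' k : ℤ, p k * sf (k - 1) = ∑' k : ℤ, p (k + 1) * sf k := by
        have h1 := (Equiv.addRight (1 : ℤ)).tsum_eq (fun k => p k * sf (k - 1))
        rw [← h1]
        exact tsum_congr fun k => by
          rw [Equiv.coe_addRight, show k + 1 - 1 = k by ring]
      have hq2 : Summable fun k : ℤ => p (k - 1) - 2 * p k + p (k + 1) :=
        (hpm.sub (hp.mul_left 2)).add hpp
      have hmain : ∑' k : ℤ, p k * Stmt18Aux.D2t a g (m + k)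
          = ∑' k : ℤ, (p (k - 1) - 2 * p k + p (k + 1)) * sf k := by
        rw [show (fun k : ℤ => p k * Stmt18Aux.D2t a g (m + k))
            = fun k : ℤ => p k * sf (k + 1) - 2 * (p k * sf k) + p k * sf (k - 1) from
          funext fun k => by rw [hD2t k]; ring]
        rw [Summable.tsum_add ((s1.sub (s2.mul_left 2))) s3, Summable.tsum_sub s1 (s2.mul_left 2),
          tsum_mul_left, hre1, hre3]
        rw [show (fun k : ℤ => (p (k - 1) - 2 * p k + p (k + 1)) * sf k)
            = fun k : ℤ => (p (k - 1) * sf k - 2 * (p k * sf k)) + p (k + 1) * sf k from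
          funext fun k => by ring]
        rw [Summable.tsum_add ((s1'.sub (s2.mul_left 2))) s3', Summable.tsum_sub s1' (s2.mul_left 2),
          tsum_mul_left]
      rw [hmain]
      have habs_sum : Summable fun k : ℤ => |(p (k - 1) - 2 * p k + p (k + 1)) * sf k| := by
        refine Summable.of_nonneg_of_le (fun k => abs_nonneg _) (fun k => ?_)
          (hq2.abs.mul_right M2)
        rw [abs_mul]
        exact mul_le_mul_of_nonneg_left (hsb k) (abs_nonneg _)
      calc |∑' k : ℤ, (p (k - 1) - 2 * p k + p (k + 1)) * sf k|
          ≤ ∑' k : ℤ, |(p (k - 1) - 2 * p k + p (k + 1)) * sf k| := by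
            have := norm_tsum_le_tsum_norm
              (f := fun k : ℤ => (p (k - 1) - 2 * p k + p (k + 1)) * sf k)
              (by simpa only [Real.norm_eq_abs] using habs_sum)
            simpa only [Real.norm_eq_abs] using this
        _ ≤ ∑' k : ℤ, |p (k - 1) - 2 * p k + p (k + 1)| * M2 := by
            refine Summable.tsum_le_tsum (fun k => ?_) habs_sum (hq2.abs.mul_right M2)
            rw [abs_mul]
            exact mul_le_mul_of_nonneg_left (hsb k) (abs_nonneg _)
        _ = (∑' k : ℤ, |p (k - 1) - 2 * p k + p (k + 1)|) * M2 := tsum_mul_right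
        _ ≤ (2 * ⨆ A : {A : Set ℝ // MeasurableSet A},
              |(μ.map (· + 2) A.1).toReal - 2 * (μ.map (· + 1) A.1).toReal
                + (μ A.1).toReal|) * M2 := by
            refine mul_le_mul_of_nonneg_right ?_ hM2_nonneg
            exact Stmt18P.key2 c
        _ = M2 * D2 μ := by rw [D2]; ring
    exact le_min bound1 bound2
end
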